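/- The quadruple of real numbers λ = −1/√5, a = 3√3/√10, c = −√3/√10, d = √2 satisfies the system (3λ²−1)(3λ⁴−4λ²+1) + λ⁴((a+c)² + d²) = 0, (a+c)(5λ² + a² + c² − 3) + c·d² = 0, d(5λ² + d² + 3c² + a·c − 3) = 0, and 1 + λ² + a·c − c² = 0, together with the side conditions −1 < λ < 0, 0 < a ≤ (λ²−1)/λ, a ≥ d ≥ 0, a > 2c, and λ² ≠ 1/3. -/

import Mathlib

/-- the quadruple (λ, a, c, d) = (−1/√5, 3√3/√10, −√3/√10, √2) solves the
constraint system of Theorem 1.1(1) for ε = 1, α = 1, with all side conditions. -/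

private lemma le_of_sq_le_sq' (x y : ℝ) (hx : 0 ≤ x) (hy : 0 ≤ y) (h : x^2 ≤ y^2) : x ≤ y := by
  nlinarith

theorem stmt_5 (lam a c d : ℝ)
    (hlam : lam = -(1/Real.sqrt 5))
    (ha : a = 3*Real.sqrt 3/Real.sqrt 10)
    (hc : c = -(Real.sqrt 3/Real.sqrt 10))
    (hd : d = Real.sqrt 2) :
    (3*lam^2 - 1)*(3*lam^4 - 4*lam^2 + 1) + lam^4*((a + c)^2 + d^2) = 0 ∧
    (a + c)*(5*lam^2 + a^2 + c^2 - 3) + c*d^2 = 0 ∧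
    d*(5*lam^2 + d^2 + 3*c^2 + a*c - 3) = 0 ∧
    1 + lam^2 + a*c - c^2 = 0 ∧
    -1 < lam ∧ lam < 0 ∧ 0 < a ∧ a ≤ (lam^2 - 1)/lam ∧
    a ≥ d ∧ d ≥ 0 ∧ a > 2*c ∧ lam^2 ≠ 1/3 := by
  have h5 : (0:ℝ) < Real.sqrt 5 := Real.sqrt_pos.mpr (by norm_num)
  have h5sq : (Real.sqrt 5)^2 = 5 := Real.sq_sqrt (by norm_num)
  have h10 : (0:ℝ) < Real.sqrt 10 := Real.sqrt_pos.mpr (by norm_num)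
  have h10sq : (Real.sqrt 10)^2 = 10 := Real.sq_sqrt (by norm_num)
  have h3 : (0:ℝ) < Real.sqrt 3 := Real.sqrt_pos.mpr (by norm_num)
  have h3sq : (Real.sqrt 3)^2 = 3 := Real.sq_sqrt (by norm_num)
  have h2 : (0:ℝ) ≤ Real.sqrt 2 := Real.sqrt_nonneg 2
  have h2sq : (Real.sqrt 2)^2 = 2 := Real.sq_sqrt (by norm_num)
  have htpos : 0 < Real.sqrt 3 / Real.sqrt 10 := div_pos h3 h10
  have ht2 : (Real.sqrt 3 / Real.sqrt 10)^2 = 3/10 := by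
    rw [div_pow, h3sq, h10sq]
  set t : ℝ := Real.sqrt 3 / Real.sqrt 10 with htdef
  have ha' : a = 3*t := by rw [ha, htdef]; ring
  have hc' : c = -t := by rw [hc, htdef]
  have hd2 : d^2 = 2 := by rw [hd]; exact h2sq
  have lam2 : lam^2 = 1/5 := by
    rw [hlam]; field_simp; exact h5sq.symm
  have hlamneg : lam < 0 := by
    have : (0:ℝ) < 1/Real.sqrt 5 := by positivity
    rw [hlam]; linarith
  have h51 : 1 < Real.sqrt 5 := by nlinarith [h5sq, h5]
  have hapos : 0 < a := by rw [ha']; linarith [htpos]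
  have ha2 : a^2 = 27/10 := by
    rw [ha']; nlinarith [ht2]
  refine ⟨?_, ?_, ?_, ?_, ?_, hlamneg, hapos, ?_, ?_, ?_, ?_, ?_⟩
  · rw [ha', hc']
    linear_combination (9*lam^4 - 10*lam^2 + 5) * lam2 + 4*lam^4 * ht2 + lam^4 * hd2
  · rw [ha', hc']
    linear_combination (10*t) * lam2 + (20*t) * ht2 - t * hd2
  · rw [ha', hc']
    linear_combination (5*d) * lam2 + d * hd2
  · rw [ha', hc']
    linear_combination lam2 - 4 * ht2
  · rw [hlam]
    have : 1/Real.sqrt 5 < 1 := (div_lt_one h5).mpr h51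
    linarith
  · have hb : (lam^2 - 1)/lam = 4*Real.sqrt 5/5 := by
      rw [lam2, hlam]; field_simp; ring
    rw [hb]
    have hbpos : 0 < 4*Real.sqrt 5/5 := by positivity
    have hbsq : (4*Real.sqrt 5/5)^2 = 16/5 := by
      rw [div_pow, mul_pow, h5sq]; norm_num
    exact le_of_sq_le_sq' _ _ hapos.le hbpos.le (by rw [ha2, hbsq]; norm_num)
  · rw [hd, ge_iff_le]
    exact le_of_sq_le_sq' _ _ h2 hapos.le (by rw [ha2, h2sq]; norm_num)
  · rw [hd]; exact h2
  · rw [ha', hc']; linarith [htpos]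
  · rw [lam2]; norm_num
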